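/- Let A and B be real n × n matrices such that the matrix pencil A + λB is regular, i.e., the polynomial λ ↦ det(A + λ·B) is not identically zero. Then there exist natural numbers r, s with r + s = n, invertible real n × n matrices P and Q, an r × r real matrix J, an s × s nilpotent real matrix N, and a bijection between the index set of size n and the disjoint sum of index sets of sizes r and s, under which the matrix P·A·Q is the block-diagonal matrix with blocks (I_r, N) and the matrix P·B·Q is the block-diagonal matrix with blocks (J, I_s). -/

import Mathlib

open Matrix LinearMap Module

private lemma wcf_submatrix_conj {n' ι : Type*} [Fintype n'] [Fintype ι]
    (e : n' ≃ ι) (M : Matrix ι n' ℝ) (X : Matrix n' n' ℝ) (N : Matrix n' ι ℝ) :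
    (M.submatrix e _root_.id * X * N.submatrix _root_.id e).submatrix e.symm e.symm
      = M * X * N := by
  ext i j
  simp [Matrix.mul_apply, Matrix.submatrix_apply]

set_option maxHeartbeats 1600000 in
/-- Weierstrass canonical form: if the matrix pencil `A + λB` is regular
(the polynomial `λ ↦ det(A + λB)` is not the zero polynomial), then there are
invertible `P, Q` bringing `(A, B)` simultaneously to the block-diagonal
canonical form `(diag(I_r, N), diag(J, I_s))` with `N` nilpotent. -/
theorem weierstrass_canonical_form {n : ℕ} (A B : Matrix (Fin n) (Fin n) ℝ)
    (hreg :
      Matrix.det (A.map (Polynomial.C) +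
        (Polynomial.X : Polynomial ℝ) • B.map Polynomial.C) ≠ 0) :
    ∃ (r s : ℕ) (_ : r + s = n) (P Q : Matrix (Fin n) (Fin n) ℝ),
      IsUnit P ∧ IsUnit Q ∧
      ∃ (J : Matrix (Fin r) (Fin r) ℝ) (N : Matrix (Fin s) (Fin s) ℝ),
        IsNilpotent N ∧
        ∃ e : Fin n ≃ Fin r ⊕ Fin s,
          Matrix.reindex e e (P * A * Q) = Matrix.fromBlocks 1 0 0 N ∧
          Matrix.reindex e e (P * B * Q) = Matrix.fromBlocks J 0 0 1 := by
  classical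
  -- Step 1: find `c` with `det (A + c • B) ≠ 0`.
  obtain ⟨c, hc⟩ : ∃ c : ℝ,
      Polynomial.eval c (Matrix.det (A.map (Polynomial.C) +
        (Polynomial.X : Polynomial ℝ) • B.map Polynomial.C)) ≠ 0 := by
    by_contra h
    push_neg at h
    exact hreg (Polynomial.zero_of_eval_zero _ h)
  set M0 : Matrix (Fin n) (Fin n) ℝ := A + c • B with hM0def
  have hdet : M0.det ≠ 0 := by
    have hmap : (A.map (Polynomial.C) +
        (Polynomial.X : Polynomial ℝ) • B.map Polynomial.C).map
          (Polynomial.evalRingHom c) = M0 := by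
      ext i j
      simp only [hM0def, Matrix.map_apply, Matrix.add_apply, Matrix.smul_apply,
        smul_eq_mul, _root_.map_add, _root_.map_mul, Polynomial.coe_evalRingHom,
        Polynomial.eval_add, Polynomial.eval_mul, Polynomial.eval_C,
        Polynomial.eval_X]
    have := (Polynomial.evalRingHom c).map_det (A.map (Polynomial.C) +
        (Polynomial.X : Polynomial ℝ) • B.map Polynomial.C)
    simp only [RingHom.mapMatrix_apply] at this
    rw [hmap] at this
    rw [← this]
    exact hc
  have hM0unit : IsUnit M0.det := isUnit_iff_ne_zero.mpr hdet
  have hinv : M0⁻¹ * M0 = 1 := Matrix.nonsing_inv_mul M0 hM0unit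
  -- Step 2: endomorphisms
  set fA : Module.End ℝ (Fin n → ℝ) := Matrix.toLin' (M0⁻¹ * A) with hfAdef
  set fB : Module.End ℝ (Fin n → ℝ) := Matrix.toLin' (M0⁻¹ * B) with hfBdef
  have hmat : M0⁻¹ * A + c • (M0⁻¹ * B) = 1 := by
    rw [← Matrix.mul_smul, ← Matrix.mul_add, ← hM0def]
    exact hinv
  have hsum : fA + c • fB = 1 := by
    have h : Matrix.toLin' (M0⁻¹ * A + c • (M0⁻¹ * B))
        = Matrix.toLin' (1 : Matrix (Fin n) (Fin n) ℝ) := by rw [hmat]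
    rw [map_add, _root_.map_smul, Matrix.toLin'_one] at h
    exact h
  have hAeq : fA = 1 - c • fB := eq_sub_of_add_eq hsum
  have hcomm : Commute fA fB := by
    show fA * fB = fB * fA
    rw [hAeq, sub_mul, mul_sub, one_mul, mul_one, smul_mul_assoc, mul_smul_comm]
  -- Step 3: Fitting decomposition
  obtain ⟨k0, hk0⟩ := Filter.eventually_atTop.mp
    (LinearMap.eventually_isCompl_ker_pow_range_pow fA)
  set k : ℕ := max k0 1 with hkdef
  have hcompl : IsCompl (LinearMap.ker (fA ^ k)) (LinearMap.range (fA ^ k)) :=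
    hk0 k (le_max_left _ _)
  set K := LinearMap.ker (fA ^ k) with hKdef
  set Rg := LinearMap.range (fA ^ k) with hRdef
  -- invariance
  have hKinv : ∀ g : Module.End ℝ (Fin n → ℝ), Commute (fA ^ k) g →
      ∀ x ∈ K, g x ∈ K := by
    intro g hg x hx
    have hx0 : (fA ^ k) x = 0 := hx
    show (fA ^ k) (g x) = 0
    calc (fA ^ k) (g x) = ((fA ^ k) * g) x := rfl
      _ = (g * (fA ^ k)) x := by rw [hg.eq]
      _ = g ((fA ^ k) x) := rfl
      _ = 0 := by rw [hx0, map_zero]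
  have hRinv : ∀ g : Module.End ℝ (Fin n → ℝ), Commute (fA ^ k) g →
      ∀ x ∈ Rg, g x ∈ Rg := by
    rintro g hg x ⟨y, rfl⟩
    refine ⟨g y, ?_⟩
    calc (fA ^ k) (g y) = ((fA ^ k) * g) y := rfl
      _ = (g * (fA ^ k)) y := by rw [hg.eq]
      _ = g ((fA ^ k) y) := rfl
  have hAK : ∀ x ∈ K, fA x ∈ K := hKinv fA ((Commute.refl fA).pow_left k)
  have hBK : ∀ x ∈ K, fB x ∈ K := hKinv fB (hcomm.pow_left k)
  have hAR : ∀ x ∈ Rg, fA x ∈ Rg := hRinv fA ((Commute.refl fA).pow_left k)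
  have hBR : ∀ x ∈ Rg, fB x ∈ Rg := hRinv fB (hcomm.pow_left k)
  set fAK : Module.End ℝ K := fA.restrict hAK with hfAKdef
  set fBK : Module.End ℝ K := fB.restrict hBK with hfBKdef
  set fAR : Module.End ℝ Rg := fA.restrict hAR with hfARdef
  set fBR : Module.End ℝ Rg := fB.restrict hBR with hfBRdef
  -- identities on restrictions
  have hsumK : fAK + c • fBK = 1 := by
    refine LinearMap.ext fun x => Subtype.ext ?_
    have h1 : (fA + c • fB) (x : Fin n → ℝ) = (x : Fin n → ℝ) := by rw [hsum]; rfl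
    simp only [LinearMap.add_apply, LinearMap.smul_apply] at h1
    simp only [LinearMap.add_apply, LinearMap.smul_apply, Submodule.coe_add,
      SetLike.val_smul, Module.End.one_apply, hfAKdef, hfBKdef,
      LinearMap.restrict_coe_apply]
    exact h1
  -- nilpotency of fAK
  have hnilK : IsNilpotent fAK := by
    refine ⟨k, ?_⟩
    rw [hfAKdef, Module.End.pow_restrict]
    refine LinearMap.ext fun x => Subtype.ext ?_
    simpa [LinearMap.restrict_coe_apply] using x.2
  -- fAR is a unit
  have hinjR : Function.Injective fAR := by
    rw [← LinearMap.ker_eq_bot]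
    rw [Submodule.eq_bot_iff]
    intro x hx
    have h0 : fA (x : Fin n → ℝ) = 0 := by
      have := congrArg Subtype.val hx
      simpa [hfARdef, LinearMap.restrict_coe_apply] using this
    have hker : (x : Fin n → ℝ) ∈ K := by
      show (fA ^ k) (x : Fin n → ℝ) = 0
      have hkk : fA ^ k = fA ^ (k - 1) * fA := by
        rw [← pow_succ]
        congr 1
        omega
      rw [hkk]
      show (fA ^ (k - 1)) (fA (x : Fin n → ℝ)) = 0
      rw [h0, map_zero]
    have hx0 : (x : Fin n → ℝ) = 0 :=
      Submodule.disjoint_def.mp hcompl.disjoint _ hker x.2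
    exact Subtype.ext hx0
  have hfARunit : IsUnit fAR :=
    (Module.End.isUnit_iff fAR).mpr
      ⟨hinjR, (LinearMap.injective_iff_surjective).mp hinjR⟩
  -- fBK is a unit
  have hcB : c • fBK = 1 - fAK := by
    rw [← hsumK]; abel
  have hUB : IsUnit ((1 : Module.End ℝ K) - fAK) :=
    IsNilpotent.isUnit_one_sub (R := Module.End ℝ K) hnilK
  have hfBKunit : IsUnit fBK := by
    have hw1 : fBK * (c • (↑hUB.unit⁻¹ : Module.End ℝ K)) = 1 := by
      rw [mul_smul_comm, ← smul_mul_assoc, hcB]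
      exact hUB.mul_val_inv
    have hw2 : (c • (↑hUB.unit⁻¹ : Module.End ℝ K)) * fBK = 1 := by
      rw [smul_mul_assoc, ← mul_smul_comm, hcB]
      exact hUB.val_inv_mul
    exact ⟨⟨fBK, c • (↑hUB.unit⁻¹ : Module.End ℝ K), hw1, hw2⟩, rfl⟩
  -- the product equivalence
  set eRK : (Rg × K) ≃ₗ[ℝ] (Fin n → ℝ) :=
    Submodule.prodEquivOfIsCompl Rg K hcompl.symm with heRKdef
  have hconjA : (eRK.symm.toLinearMap ∘ₗ fA) ∘ₗ eRK.toLinearMap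
      = LinearMap.prodMap fAR fAK := by
    apply LinearMap.ext
    rintro ⟨a, b⟩
    apply eRK.injective
    rw [LinearMap.comp_apply, LinearMap.comp_apply, LinearEquiv.coe_coe,
      LinearEquiv.coe_coe, LinearEquiv.apply_symm_apply]
    show fA (eRK (a, b)) = eRK (fAR a, fAK b)
    simp only [heRKdef, Submodule.coe_prodEquivOfIsCompl', map_add]
    simp [hfARdef, hfAKdef, LinearMap.restrict_coe_apply]
  have hconjB : (eRK.symm.toLinearMap ∘ₗ fB) ∘ₗ eRK.toLinearMap
      = LinearMap.prodMap fBR fBK := by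
    apply LinearMap.ext
    rintro ⟨a, b⟩
    apply eRK.injective
    rw [LinearMap.comp_apply, LinearMap.comp_apply, LinearEquiv.coe_coe,
      LinearEquiv.coe_coe, LinearEquiv.apply_symm_apply]
    show fB (eRK (a, b)) = eRK (fBR a, fBK b)
    simp only [heRKdef, Submodule.coe_prodEquivOfIsCompl', map_add]
    simp [hfBRdef, hfBKdef, LinearMap.restrict_coe_apply]
  -- bases
  set r : ℕ := finrank ℝ Rg with hrdef
  set s : ℕ := finrank ℝ K with hsdef
  have hrs : r + s = n := by
    rw [hrdef, hsdef]
    rw [Submodule.finrank_add_eq_of_isCompl hcompl.symm]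
    simp
  set bR : Basis (Fin r) ℝ Rg := Module.finBasis ℝ Rg with hbRdef
  set bK : Basis (Fin s) ℝ K := Module.finBasis ℝ K with hbKdef
  set D : Basis (Fin r ⊕ Fin s) ℝ (Rg × K) := bR.prod bK with hDdef
  set std : Basis (Fin n) ℝ (Fin n → ℝ) := Pi.basisFun ℝ (Fin n) with hstddef
  set L : Module.End ℝ (Rg × K) :=
    LinearMap.prodMap (↑hfARunit.unit⁻¹ : Module.End ℝ Rg)
      (↑hfBKunit.unit⁻¹ : Module.End ℝ K) with hLdef
  set Linv : Module.End ℝ (Rg × K) := LinearMap.prodMap fAR fBK with hLinvdef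
  have hLinvL : Linv * L = 1 := by
    rw [hLdef, hLinvdef, LinearMap.prodMap_mul, hfARunit.mul_val_inv,
      hfBKunit.mul_val_inv, LinearMap.prodMap_one]
  set uu : (Fin n → ℝ) ≃ₗ[ℝ] (Rg × K) := eRK.symm with huudef
  set P' : Matrix (Fin r ⊕ Fin s) (Fin n) ℝ :=
    LinearMap.toMatrix std D (L ∘ₗ uu.toLinearMap) with hP'def
  set Q' : Matrix (Fin n) (Fin r ⊕ Fin s) ℝ :=
    LinearMap.toMatrix D std uu.symm.toLinearMap with hQ'def
  set e : Fin n ≃ Fin r ⊕ Fin s := (finCongr hrs.symm).trans finSumFinEquiv.symm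
    with hedef
  -- key block computations
  have hstdA : LinearMap.toMatrix std std fA = M0⁻¹ * A := by
    rw [hstddef, LinearMap.toMatrix_eq_toMatrix', hfAdef, LinearMap.toMatrix'_toLin']
  have hstdB : LinearMap.toMatrix std std fB = M0⁻¹ * B := by
    rw [hstddef, LinearMap.toMatrix_eq_toMatrix', hfBdef, LinearMap.toMatrix'_toLin']
  have hconjA' : ((L ∘ₗ uu.toLinearMap) ∘ₗ fA) ∘ₗ uu.symm.toLinearMap
      = LinearMap.prodMap ((↑hfARunit.unit⁻¹ : Module.End ℝ Rg) * fAR)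
          ((↑hfBKunit.unit⁻¹ : Module.End ℝ K) * fAK) := by
    have : ((L ∘ₗ uu.toLinearMap) ∘ₗ fA) ∘ₗ uu.symm.toLinearMap
        = L ∘ₗ ((uu.toLinearMap ∘ₗ fA) ∘ₗ uu.symm.toLinearMap) := by
      simp only [LinearMap.comp_assoc]
    rw [this]
    have h2 : (uu.toLinearMap ∘ₗ fA) ∘ₗ uu.symm.toLinearMap
        = LinearMap.prodMap fAR fAK := by
      rw [huudef]
      simpa using hconjA
    rw [h2, hLdef, ← Module.End.mul_eq_comp, LinearMap.prodMap_mul]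
  have hconjB' : ((L ∘ₗ uu.toLinearMap) ∘ₗ fB) ∘ₗ uu.symm.toLinearMap
      = LinearMap.prodMap ((↑hfARunit.unit⁻¹ : Module.End ℝ Rg) * fBR)
          ((↑hfBKunit.unit⁻¹ : Module.End ℝ K) * fBK) := by
    have : ((L ∘ₗ uu.toLinearMap) ∘ₗ fB) ∘ₗ uu.symm.toLinearMap
        = L ∘ₗ ((uu.toLinearMap ∘ₗ fB) ∘ₗ uu.symm.toLinearMap) := by
      simp only [LinearMap.comp_assoc]
    rw [this]
    have h2 : (uu.toLinearMap ∘ₗ fB) ∘ₗ uu.symm.toLinearMap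
        = LinearMap.prodMap fBR fBK := by
      rw [huudef]
      simpa using hconjB
    rw [h2, hLdef, ← Module.End.mul_eq_comp, LinearMap.prodMap_mul]
  set N : Matrix (Fin s) (Fin s) ℝ :=
    LinearMap.toMatrix bK bK ((↑hfBKunit.unit⁻¹ : Module.End ℝ K) * fAK) with hNdef
  set J : Matrix (Fin r) (Fin r) ℝ :=
    LinearMap.toMatrix bR bR ((↑hfARunit.unit⁻¹ : Module.End ℝ Rg) * fBR) with hJdef
  have keyA : P' * (M0⁻¹ * A) * Q' = Matrix.fromBlocks 1 0 0 N := by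
    rw [← hstdA, hP'def, hQ'def, ← LinearMap.toMatrix_comp std std D,
      ← LinearMap.toMatrix_comp D std D, hconjA', LinearMap.toMatrix_prodMap,
      hfARunit.val_inv_mul, LinearMap.toMatrix_one, hNdef]
  have keyB : P' * (M0⁻¹ * B) * Q' = Matrix.fromBlocks J 0 0 1 := by
    rw [← hstdB, hP'def, hQ'def, ← LinearMap.toMatrix_comp std std D,
      ← LinearMap.toMatrix_comp D std D, hconjB', LinearMap.toMatrix_prodMap,
      hfBKunit.val_inv_mul, LinearMap.toMatrix_one, hJdef]
  -- nilpotency of N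
  have hNnil : IsNilpotent N := by
    have hcomK : Commute ((↑hfBKunit.unit⁻¹ : Module.End ℝ K)) fAK := by
      have h1 : Commute fBK fAK := by
        have hAKeq : fAK = 1 - c • fBK := by
          rw [← hsumK]; abel
        have hgen : ∀ (S : Type) [Ring S] [Module ℝ S] [SMulCommClass ℝ S S]
            [IsScalarTower ℝ S S] (b : S), b * (1 - c • b) = (1 - c • b) * b := by
          intro S _ _ _ _ b
          rw [mul_sub, sub_mul, mul_one, one_mul, mul_smul_comm, smul_mul_assoc]
        show fBK * fAK = fAK * fBK
        rw [hAKeq]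
        exact hgen _ fBK
      have h2 : Commute (↑hfBKunit.unit : Module.End ℝ K) fAK := by
        rwa [IsUnit.unit_spec]
      exact h2.units_inv_left
    have hnilN' : IsNilpotent ((↑hfBKunit.unit⁻¹ : Module.End ℝ K) * fAK) :=
      Commute.isNilpotent_mul_left hcomK hnilK
    have : N = (LinearMap.toMatrixAlgEquiv bK)
        ((↑hfBKunit.unit⁻¹ : Module.End ℝ K) * fAK) := rfl
    rw [this]
    exact hnilN'.map (LinearMap.toMatrixAlgEquiv bK)
  -- invertibility of the pieces
  have hM0invUnit : IsUnit M0⁻¹ :=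
    ⟨⟨M0⁻¹, M0, hinv, Matrix.mul_nonsing_inv M0 hM0unit⟩, rfl⟩
  have hPunit : IsUnit (P'.submatrix e _root_.id) := by
    set Pinv' : Matrix (Fin n) (Fin r ⊕ Fin s) ℝ :=
      LinearMap.toMatrix D std (uu.symm.toLinearMap ∘ₗ Linv) with hPinv'def
    have hmul : Pinv'.submatrix _root_.id e * P'.submatrix e _root_.id = 1 := by
      rw [Matrix.submatrix_mul_equiv]
      rw [hPinv'def, hP'def, ← LinearMap.toMatrix_comp std D std]
      have hcompid : (uu.symm.toLinearMap ∘ₗ Linv) ∘ₗ (L ∘ₗ uu.toLinearMap)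
          = LinearMap.id := by
        have : (uu.symm.toLinearMap ∘ₗ Linv) ∘ₗ (L ∘ₗ uu.toLinearMap)
            = uu.symm.toLinearMap ∘ₗ ((Linv * L) ∘ₗ uu.toLinearMap) := by
          rw [Module.End.mul_eq_comp]
          simp only [LinearMap.comp_assoc]
        rw [this, hLinvL, Module.End.one_eq_id, LinearMap.id_comp]
        refine LinearMap.ext fun x => ?_
        simp
      rw [hcompid, LinearMap.toMatrix_id, Matrix.submatrix_id_id]
    exact ⟨⟨P'.submatrix e _root_.id, Pinv'.submatrix _root_.id e,
      mul_eq_one_comm.mp hmul, hmul⟩, rfl⟩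
  have hQunit : IsUnit (Q'.submatrix _root_.id e) := by
    set Qinv' : Matrix (Fin r ⊕ Fin s) (Fin n) ℝ :=
      LinearMap.toMatrix std D uu.toLinearMap with hQinv'def
    have hmul : Q'.submatrix _root_.id e * Qinv'.submatrix e _root_.id = 1 := by
      rw [Matrix.submatrix_mul_equiv]
      rw [hQinv'def, hQ'def, ← LinearMap.toMatrix_comp std D std]
      have hcompid : uu.symm.toLinearMap ∘ₗ uu.toLinearMap = LinearMap.id := by
        refine LinearMap.ext fun x => ?_
        simp
      rw [hcompid, LinearMap.toMatrix_id, Matrix.submatrix_id_id]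
    exact ⟨⟨Q'.submatrix _root_.id e, Qinv'.submatrix e _root_.id,
      hmul, mul_eq_one_comm.mp hmul⟩, rfl⟩
  -- assemble
  refine ⟨r, s, hrs, (P'.submatrix e _root_.id) * M0⁻¹, Q'.submatrix _root_.id e,
    hPunit.mul hM0invUnit, hQunit, J, N, hNnil, e, ?_, ?_⟩
  · rw [Matrix.reindex_apply]
    have hassoc : (P'.submatrix e _root_.id) * M0⁻¹ * A * (Q'.submatrix _root_.id e)
        = P'.submatrix e _root_.id * (M0⁻¹ * A) * Q'.submatrix _root_.id e := by
      rw [Matrix.mul_assoc (P'.submatrix e _root_.id) M0⁻¹ A]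
    rw [hassoc, wcf_submatrix_conj, keyA]
  · rw [Matrix.reindex_apply]
    have hassoc : (P'.submatrix e _root_.id) * M0⁻¹ * B * (Q'.submatrix _root_.id e)
        = P'.submatrix e _root_.id * (M0⁻¹ * B) * Q'.submatrix _root_.id e := by
      rw [Matrix.mul_assoc (P'.submatrix e _root_.id) M0⁻¹ B]
    rw [hassoc, wcf_submatrix_conj, keyB]
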